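/- arXiv:math/0312521 — 2 statements merged into one kernel-verified Lean document; each statement's English description precedes it below -/
import Mathlib

section
/- Let ρ : G → GL₃(K) be an absolutely irreducible representation of a group G over a field K of characteristic not 2, and let γ be an involution of G extended by an element A ∈ GL₃(K) satisfying ρ(γ g γ⁻¹) = A · (ρ(g)ᵀ)⁻¹ · A⁻¹ for all g ∈ G. Then A is symmetric, i.e. Aᵀ = A. -/
open Matrix
/-- If `ρ : G → GL₃(K)` is absolutely irreducible (its commutant consists of scalars),
`γ` an involution of `G`, and `A ∈ GL₃(K)` satisfies
`ρ(γ g) = A ⬝ ᵗρ(g)⁻¹ ⬝ A⁻¹` for all `g`, then `A` is symmetric. -/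
theorem stmt0 {G : Type*} [Group G] {K : Type*} [Field K] (h2 : (2 : K) ≠ 0)
    (ρ : G →* Matrix.GeneralLinearGroup (Fin 3) K)
    (hschur : ∀ M : Matrix (Fin 3) (Fin 3) K,
      (∀ g : G, M * (ρ g : Matrix (Fin 3) (Fin 3) K) = (ρ g : Matrix (Fin 3) (Fin 3) K) * M) →
      ∃ c : K, M = c • (1 : Matrix (Fin 3) (Fin 3) K))
    (γ : G ≃* G) (hγ : ∀ g : G, γ (γ g) = g)
    (A : (Matrix (Fin 3) (Fin 3) K)ˣ)
    (hA : ∀ g : G, (ρ (γ g) : Matrix (Fin 3) (Fin 3) K) =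
      (A : Matrix (Fin 3) (Fin 3) K) *
        ((((ρ g)⁻¹ : Matrix.GeneralLinearGroup (Fin 3) K) : Matrix (Fin 3) (Fin 3) K))ᵀ *
        ((A⁻¹ : (Matrix (Fin 3) (Fin 3) K)ˣ) : Matrix (Fin 3) (Fin 3) K)) :
    (A : Matrix (Fin 3) (Fin 3) K)ᵀ = (A : Matrix (Fin 3) (Fin 3) K) := by
  set B := (A : Matrix (Fin 3) (Fin 3) K) with hBdef
  have hBdet : IsUnit B.det := (Matrix.isUnit_iff_isUnit_det B).mp A.isUnit
  have hB1 : B * B⁻¹ = 1 := mul_nonsing_inv B hBdet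
  have hB2 : B⁻¹ * B = 1 := nonsing_inv_mul B hBdet
  -- rewrite hA in terms of matrix inverses
  have hA' : ∀ g : G, (ρ (γ g) : Matrix (Fin 3) (Fin 3) K) =
      B * ((ρ g : Matrix (Fin 3) (Fin 3) K))⁻¹ᵀ * B⁻¹ := by
    intro g
    have := hA g
    rwa [Matrix.coe_units_inv, Matrix.coe_units_inv] at this
  have hRdet : ∀ g : G, IsUnit (ρ g : Matrix (Fin 3) (Fin 3) K).det :=
    fun g => (Matrix.isUnit_iff_isUnit_det _).mp (ρ g).isUnit
  -- key commutation
  have hcomm : ∀ g : G, (Bᵀ * B⁻¹) * (ρ g : Matrix (Fin 3) (Fin 3) K)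
      = (ρ g : Matrix (Fin 3) (Fin 3) K) * (Bᵀ * B⁻¹) := by
    intro g
    set Rg := (ρ g : Matrix (Fin 3) (Fin 3) K) with hRg
    have h1 : (ρ (γ g) : Matrix (Fin 3) (Fin 3) K) = B * Rg⁻¹ᵀ * B⁻¹ := hA' g
    have h2' : Rg = B * ((ρ (γ g) : Matrix (Fin 3) (Fin 3) K))⁻¹ᵀ * B⁻¹ := by
      have := hA' (γ g); rwa [hγ g] at this
    have hinv : ((ρ (γ g) : Matrix (Fin 3) (Fin 3) K))⁻¹ = B * Rgᵀ * B⁻¹ := by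
      rw [h1]
      rw [Matrix.mul_inv_rev, Matrix.mul_inv_rev, Matrix.nonsing_inv_nonsing_inv B hBdet,
        Matrix.transpose_nonsing_inv, Matrix.nonsing_inv_nonsing_inv _ (by simpa using hRdet g)]
      rw [Matrix.mul_assoc]
    have h3 : Rg = B * (B⁻¹ᵀ * Rg * Bᵀ) * B⁻¹ := by
      have htr : (B * Rgᵀ * B⁻¹)ᵀ = B⁻¹ᵀ * Rg * Bᵀ := by
        rw [Matrix.transpose_mul, Matrix.transpose_mul, transpose_transpose,
          ← Matrix.mul_assoc]
      rw [hinv] at h2'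
      rw [htr] at h2'
      exact h2'
    have h4 : B⁻¹ * Rg * B = B⁻¹ᵀ * Rg * Bᵀ := by
      calc B⁻¹ * Rg * B = B⁻¹ * (B * (B⁻¹ᵀ * Rg * Bᵀ) * B⁻¹) * B := by rw [← h3]
        _ = (B⁻¹ * B) * (B⁻¹ᵀ * Rg * Bᵀ) * (B⁻¹ * B) := by
            simp only [Matrix.mul_assoc]
        _ = B⁻¹ᵀ * Rg * Bᵀ := by rw [hB2]; simp
    have hBt1 : Bᵀ * B⁻¹ᵀ = 1 := by
      rw [Matrix.transpose_nonsing_inv, Matrix.mul_nonsing_inv _ (by simpa using hBdet)]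
    have h5 : Bᵀ * (B⁻¹ * Rg * B) * B⁻¹ = Rg * Bᵀ * B⁻¹ := by
      rw [h4]
      calc Bᵀ * (B⁻¹ᵀ * Rg * Bᵀ) * B⁻¹ = (Bᵀ * B⁻¹ᵀ) * Rg * (Bᵀ * B⁻¹) := by
            simp only [Matrix.mul_assoc]
        _ = Rg * Bᵀ * B⁻¹ := by rw [hBt1]; simp [Matrix.mul_assoc]
    calc Bᵀ * B⁻¹ * Rg = Bᵀ * (B⁻¹ * Rg * (B * B⁻¹)) := by
          rw [hB1]; simp [Matrix.mul_assoc]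
      _ = Bᵀ * (B⁻¹ * Rg * B) * B⁻¹ := by simp only [Matrix.mul_assoc]
      _ = Rg * (Bᵀ * B⁻¹) := by rw [h5, Matrix.mul_assoc]
  obtain ⟨c, hc⟩ := hschur (Bᵀ * B⁻¹) hcomm
  have hBt : Bᵀ = c • B := by
    have : (Bᵀ * B⁻¹) * B = (c • 1) * B := by rw [hc]
    rwa [Matrix.mul_assoc, hB2, mul_one, smul_mul_assoc, one_mul] at this
  have hBne : B ≠ 0 := by
    intro h
    have : (1 : Matrix (Fin 3) (Fin 3) K) = 0 := by rw [← hB1, h, zero_mul]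
    exact one_ne_zero this
  have hc2 : c * c = 1 := by
    have hB2' : B = (c * c) • B := by
      conv_lhs => rw [← transpose_transpose B, hBt, Matrix.transpose_smul, hBt, smul_smul]
    have hz : (c * c - 1) • B = 0 := by rw [sub_smul, one_smul, ← hB2', sub_self]
    rcases smul_eq_zero.mp hz with h | h
    · exact sub_eq_zero.mp h
    · exact absurd h hBne
  have hc3 : c ^ 3 = 1 := by
    have hdet : B.det = c ^ 3 * B.det := by
      conv_lhs => rw [← Matrix.det_transpose B, hBt]
      rw [Matrix.det_smul]
      simp
    have : B.det ≠ 0 := hBdet.ne_zero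
    field_simp at hdet
    exact hdet.symm
  have hc1 : c = 1 := by
    calc c = c * (c * c) := by rw [hc2, mul_one]
      _ = c ^ 3 := by ring
      _ = 1 := hc3
  rw [hBt, hc1, one_smul]
end

section
/- In the setting of the previous statement, if additionally f is not divisible by the uniformizer (f ∉ μM) and n ≥ 1, then P f is also not divisible (P f ∉ μM). -/
/-- In the setting of the previous statement, if moreover `f ∉ μM` and `n ≥ 1`,
then `Pf ∉ μM`. -/
theorem stmt8 {O : Type*} [CommRing O] [IsDomain O] [IsDiscreteValuationRing O]
    {M : Type*} [AddCommGroup M] [Module O M] [Module.Free O M] [Module.Finite O M]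
    (T : M →ₗ[O] M) (a b : O) (hab : IsUnit (a - b))
    (hT : (T - a • LinearMap.id) ∘ₗ (T - b • LinearMap.id) = 0)
    (P : M →ₗ[O] M)
    (hPa : ∀ x ∈ LinearMap.ker (T - a • LinearMap.id), P x = x)
    (hPb : ∀ x ∈ LinearMap.ker (T - b • LinearMap.id), P x = 0)
    (n : ℕ) (hn : 1 ≤ n) (f : M)
    (hf : T f - a • f ∈ (IsLocalRing.maximalIdeal O ^ n) • (⊤ : Submodule O M))
    (hfnd : f ∉ (IsLocalRing.maximalIdeal O) • (⊤ : Submodule O M)) :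
    P f ∉ (IsLocalRing.maximalIdeal O) • (⊤ : Submodule O M) := by
  set μM := (IsLocalRing.maximalIdeal O) • (⊤ : Submodule O M) with hμM
  obtain ⟨u, hu⟩ := hab
  -- Tf - af ∈ μM
  have hf1 : T f - a • f ∈ μM := by
    refine Submodule.smul_mono_left ?_ hf
    exact Ideal.pow_le_self (by omega)
  -- commuted composition
  have hT' : (T - b • LinearMap.id) ∘ₗ (T - a • LinearMap.id) = 0 := by
    rw [← hT]
    ext x
    simp only [LinearMap.comp_apply, LinearMap.sub_apply, LinearMap.smul_apply,
      LinearMap.id_apply, map_sub, map_smul, smul_sub]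
    rw [smul_comm a b]
    abel
  -- (T-b) f ∈ ker (T-a)
  have hka : T f - b • f ∈ LinearMap.ker (T - a • LinearMap.id) := by
    have := LinearMap.congr_fun hT f
    simpa [LinearMap.comp_apply] using this
  have hkb : T f - a • f ∈ LinearMap.ker (T - b • LinearMap.id) := by
    have := LinearMap.congr_fun hT' f
    simpa [LinearMap.comp_apply] using this
  -- key formula: (a - b) • P f = T f - b • f
  have key : (a - b) • P f = T f - b • f := by
    have hdecomp : (a - b) • f = (T f - b • f) - (T f - a • f) := by
      rw [sub_smul]; abel
    have : P ((a - b) • f) = T f - b • f := by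
      rw [hdecomp, map_sub, hPa _ hka, hPb _ hkb, sub_zero]
    simpa [map_smul] using this
  intro hPf
  -- then T f - b • f ∈ μM
  have h1 : T f - b • f ∈ μM := by
    rw [← key]
    exact Submodule.smul_mem _ _ hPf
  -- so (a - b) • f ∈ μM
  have h2 : (a - b) • f ∈ μM := by
    have : (a - b) • f = (T f - b • f) - (T f - a • f) := by
      rw [sub_smul]; abel
    rw [this]
    exact Submodule.sub_mem _ h1 hf1
  -- so f ∈ μM, contradiction
  apply hfnd
  have : ((↑u⁻¹ : O) * (a - b)) • f ∈ μM := by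
    rw [mul_smul]
    exact Submodule.smul_mem _ _ h2
  rwa [← hu, Units.inv_mul, one_smul] at this
end
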